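/- Let E and H be real Hilbert spaces, M : E →L[ℝ] H a nonzero continuous linear map, and f : H → ℝ a nonnegative differentiable function whose gradient is β-Lipschitz for some β > 0. Let L ≥ 0 and let ĝ : E → E satisfy ‖ĝ(γ) − ∇(f ∘ M)(γ)‖ ≤ L·‖M‖ for all γ ∈ E, where ‖M‖ is the operator norm. Define the iterates γ^{(t+1)} = γ^{(t)} − η·ĝ(γ^{(t)}) with step size η = 1/(β‖M‖²) from any initialization γ^{(0)}. Then for every integer T ≥ 1: (1/T)·∑_{t=0}^{T−1} ‖∇(f ∘ M)(γ^{(t)})‖² ≤ (2β‖M‖²/T)·f(M γ^{(0)}) + L²·‖M‖². (Theorem 1, convergence of AdaRC: the adaptation of hop-aggregation parameters converges to a region of small gradient at rate 1/T with error proportional to the squared Lipschitz constant of the base TTA prediction.) -/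

import Mathlib

open scoped NNReal

/-- **Theorem 1 (convergence of AdaRC).**
Gradient descent on `f ∘ M` with step size `1/(β‖M‖²)` and gradient oracle whose error is at
most `L‖M‖` satisfies
`(1/T)·∑_{t<T} ‖∇(f∘M)(γ_t)‖² ≤ (2β‖M‖²/T)·f(Mγ₀) + L²‖M‖²`. -/
theorem adarc_convergence
    {E H : Type*} [NormedAddCommGroup E] [InnerProductSpace ℝ E] [CompleteSpace E]
    [NormedAddCommGroup H] [InnerProductSpace ℝ H] [CompleteSpace H]
    (M : E →L[ℝ] H) (hM : M ≠ 0)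
    (f : H → ℝ) (hf0 : ∀ z, 0 ≤ f z) (hfd : Differentiable ℝ f)
    (β : ℝ≥0) (hβ : 0 < β) (hfsmooth : LipschitzWith β (gradient f))
    (L : ℝ) (hL : 0 ≤ L)
    (gEst : E → E) (hgEst : ∀ γ : E, ‖gEst γ - gradient (fun γ' => f (M γ')) γ‖ ≤ L * ‖M‖)
    (γseq : ℕ → E)
    (hstep : ∀ t, γseq (t + 1) = γseq t - (1 / (β * ‖M‖ ^ 2)) • gEst (γseq t))
    (T : ℕ) (hT : 1 ≤ T) :
    (1 / T : ℝ) * ∑ t ∈ Finset.range T, ‖gradient (fun γ' => f (M γ')) (γseq t)‖ ^ 2 ≤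
      (2 * β * ‖M‖ ^ 2 / T) * f (M (γseq 0)) + L ^ 2 * ‖M‖ ^ 2 := by
  classical
  set F : E → ℝ := fun γ' => f (M γ') with hFdef
  set g : E → E := gradient F with hgdef
  have hMnorm : 0 < ‖M‖ := norm_pos_iff.mpr hM
  have hβR : (0:ℝ) < β := by exact_mod_cast hβ
  set C : ℝ := (β : ℝ) * ‖M‖ ^ 2 with hCdef
  have hCpos : 0 < C := by positivity
  -- gradient of F
  have hgrad : ∀ x : E, HasGradientAt F (M.adjoint (gradient f (M x))) x := by
    intro x
    have h2 : HasFDerivAt f (InnerProductSpace.toDual ℝ H (gradient f (M x))) (M x) :=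
      hasGradientAt_iff_hasFDerivAt.mp (hfd (M x)).hasGradientAt
    have h3 : HasFDerivAt F ((InnerProductSpace.toDual ℝ H (gradient f (M x))).comp M) x :=
      h2.comp x M.hasFDerivAt
    have h4 : (InnerProductSpace.toDual ℝ H (gradient f (M x))).comp M
        = InnerProductSpace.toDual ℝ E (M.adjoint (gradient f (M x))) := by
      ext v
      simp [InnerProductSpace.toDual_apply_apply, ContinuousLinearMap.adjoint_inner_left]
    rw [h4] at h3
    exact hasGradientAt_iff_hasFDerivAt.mpr h3
  have hgx : ∀ x, g x = M.adjoint (gradient f (M x)) := fun x => (hgrad x).gradient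
  have ggrad : ∀ x : E, HasGradientAt F (g x) x := fun x => (hgx x) ▸ hgrad x
  -- Lipschitz gradient of F
  have hgl : ∀ x y : E, ‖g x - g y‖ ≤ C * ‖x - y‖ := by
    intro x y
    rw [hgx x, hgx y, ← map_sub]
    have h1 : ‖M.adjoint (gradient f (M x) - gradient f (M y))‖
        ≤ ‖M.adjoint‖ * ‖gradient f (M x) - gradient f (M y)‖ :=
      (M.adjoint).le_opNorm _
    have h2 : ‖M.adjoint‖ = ‖M‖ := ContinuousLinearMap.adjoint.norm_map M
    have h3 : ‖gradient f (M x) - gradient f (M y)‖ ≤ β * ‖M x - M y‖ := by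
      have := hfsmooth.dist_le_mul (M x) (M y)
      simpa [dist_eq_norm] using this
    have h4 : ‖M x - M y‖ ≤ ‖M‖ * ‖x - y‖ := by
      rw [← map_sub]; exact M.le_opNorm _
    have h5 : ‖gradient f (M x) - gradient f (M y)‖ ≤ β * (‖M‖ * ‖x - y‖) := by
      calc ‖gradient f (M x) - gradient f (M y)‖ ≤ β * ‖M x - M y‖ := h3
        _ ≤ β * (‖M‖ * ‖x - y‖) := by gcongr
    calc ‖M.adjoint (gradient f (M x) - gradient f (M y))‖
        ≤ ‖M.adjoint‖ * ‖gradient f (M x) - gradient f (M y)‖ := h1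
      _ ≤ ‖M‖ * (β * (‖M‖ * ‖x - y‖)) := by rw [h2]; gcongr
      _ = C * ‖x - y‖ := by rw [hCdef]; ring
  -- descent lemma
  have descent : ∀ x d : E, F (x + d) ≤ F x + inner ℝ (g x) d + C / 2 * ‖d‖ ^ 2 := by
    intro x d
    set ψ : ℝ → ℝ := fun s => F (x + s • d) - s * inner ℝ (g x) d - C / 2 * s ^ 2 * ‖d‖ ^ 2
      with hψdef
    have hline : ∀ s : ℝ, HasDerivAt (fun s : ℝ => x + s • d) d s := by
      intro s
      simpa using ((hasDerivAt_id s).smul_const d).const_add x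
    have hψ' : ∀ s : ℝ,
        HasDerivAt ψ ((inner ℝ (g (x + s • d)) d : ℝ) - inner ℝ (g x) d - C * s * ‖d‖ ^ 2) s := by
      intro s
      have h1 : HasDerivAt (fun s : ℝ => F (x + s • d)) (inner ℝ (g (x + s • d)) d : ℝ) s := by
        have hF' : HasFDerivAt F (InnerProductSpace.toDual ℝ E (g (x + s • d))) (x + s • d) :=
          hasGradientAt_iff_hasFDerivAt.mp (ggrad (x + s • d))
        have := hF'.comp_hasDerivAt s (hline s)
        simp only [InnerProductSpace.toDual_apply_apply] at this
        exact this
      have h2 : HasDerivAt (fun s : ℝ => s * inner ℝ (g x) d) (inner ℝ (g x) d : ℝ) s := by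
        simpa using (hasDerivAt_id s).mul_const (inner ℝ (g x) d : ℝ)
      have h3 : HasDerivAt (fun s : ℝ => C / 2 * s ^ 2 * ‖d‖ ^ 2) (C * s * ‖d‖ ^ 2) s := by
        have := ((hasDerivAt_pow 2 s).const_mul (C / 2)).mul_const (‖d‖ ^ 2)
        exact this.congr_deriv (by ring)
      exact (h1.sub h2).sub h3
    have hanti : AntitoneOn ψ (Set.Icc (0:ℝ) 1) := by
      apply antitoneOn_of_deriv_nonpos (convex_Icc 0 1)
      · exact fun s _ => (hψ' s).continuousAt.continuousWithinAt
      · intro s hs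
        exact ((hψ' s).differentiableAt).differentiableWithinAt
      · intro s hs
        rw [interior_Icc] at hs
        rw [(hψ' s).deriv]
        have hinner : (inner ℝ (g (x + s • d)) d : ℝ) - inner ℝ (g x) d
            = inner ℝ (g (x + s • d) - g x) d := (inner_sub_left _ _ _).symm
        have hb : (inner ℝ (g (x + s • d) - g x) d : ℝ) ≤ C * s * ‖d‖ ^ 2 := by
          calc (inner ℝ (g (x + s • d) - g x) d : ℝ)
              ≤ ‖g (x + s • d) - g x‖ * ‖d‖ := real_inner_le_norm _ _
            _ ≤ C * ‖(x + s • d) - x‖ * ‖d‖ := by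
                have := hgl (x + s • d) x
                gcongr
            _ = C * s * ‖d‖ ^ 2 := by
                have : ‖(x + s • d) - x‖ = s * ‖d‖ := by
                  simp [norm_smul, abs_of_pos hs.1]
                rw [this]; ring
        rw [hinner]
        linarith
    have := hanti (Set.left_mem_Icc.mpr zero_le_one) (Set.right_mem_Icc.mpr zero_le_one)
      zero_le_one
    have h0 : ψ 0 = F x := by simp [hψdef]
    have h1 : ψ 1 = F (x + d) - inner ℝ (g x) d - C / 2 * ‖d‖ ^ 2 := by simp [hψdef]
    rw [h0, h1] at this
    linarith
  -- per-step bound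
  have hstepbound : ∀ t, ‖g (γseq t)‖ ^ 2
      ≤ 2 * C * (F (γseq t) - F (γseq (t + 1))) + L ^ 2 * ‖M‖ ^ 2 := by
    intro t
    set x := γseq t with hx
    set gh := gEst x with hgh
    set e := gh - g x with he
    have henorm : ‖e‖ ≤ L * ‖M‖ := hgEst x
    have hstep' : γseq (t + 1) = x + (-((1 / C) • gh)) := by
      rw [hstep t]
      rw [sub_eq_add_neg]
    have hdes := descent x (-((1 / C) • gh))
    rw [← hstep'] at hdes
    have hinner : (inner ℝ (g x) (-((1 / C) • gh)) : ℝ) = -(1 / C) * inner ℝ (g x) gh := by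
      rw [inner_neg_right, real_inner_smul_right]; ring
    have hnorm : ‖-((1 / C) • gh)‖ ^ 2 = (1 / C) ^ 2 * ‖gh‖ ^ 2 := by
      rw [norm_neg, norm_smul, mul_pow, Real.norm_eq_abs, sq_abs]
    have hghe : gh = g x + e := by rw [he]; abel
    have hip : (inner ℝ (g x) gh : ℝ) = ‖g x‖ ^ 2 + inner ℝ (g x) e := by
      rw [hghe, inner_add_right, real_inner_self_eq_norm_sq]
    have hns : ‖gh‖ ^ 2 = ‖g x‖ ^ 2 + 2 * inner ℝ (g x) e + ‖e‖ ^ 2 := by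
      rw [hghe]; exact norm_add_sq_real _ _
    have he2 : ‖e‖ ^ 2 ≤ L ^ 2 * ‖M‖ ^ 2 := by
      have := pow_le_pow_left₀ (norm_nonneg e) henorm 2
      calc ‖e‖ ^ 2 ≤ (L * ‖M‖) ^ 2 := this
        _ = L ^ 2 * ‖M‖ ^ 2 := by ring
    rw [hinner, hnorm] at hdes
    have key : F (γseq (t + 1)) ≤ F x - 1 / (2 * C) * ‖g x‖ ^ 2 + 1 / (2 * C) * ‖e‖ ^ 2 := by
      rw [hip, hns] at hdes
      have hCne : C ≠ 0 := ne_of_gt hCpos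
      have hq : F x + -(1 / C) * (‖g x‖ ^ 2 + inner ℝ (g x) e)
          + C / 2 * ((1 / C) ^ 2 * (‖g x‖ ^ 2 + 2 * inner ℝ (g x) e + ‖e‖ ^ 2))
          = F x - 1 / (2 * C) * ‖g x‖ ^ 2 + 1 / (2 * C) * ‖e‖ ^ 2 := by
        field_simp
        ring
      linarith [hdes, hq.le, hq.ge]
    have h2C : (0:ℝ) < 2 * C := by linarith
    have h1 : 1 / (2 * C) * ‖g x‖ ^ 2 ≤ F x - F (γseq (t + 1)) + 1 / (2 * C) * ‖e‖ ^ 2 := by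
      linarith
    have h2 := mul_le_mul_of_nonneg_left h1 (le_of_lt h2C)
    have e1 : 2 * C * (1 / (2 * C) * ‖g x‖ ^ 2) = ‖g x‖ ^ 2 := by
      field_simp
    have e2 : 2 * C * (F x - F (γseq (t + 1)) + 1 / (2 * C) * ‖e‖ ^ 2)
        = 2 * C * (F x - F (γseq (t + 1))) + ‖e‖ ^ 2 := by
      field_simp
    linarith [h2, e1.le, e1.ge, e2.le, e2.ge, he2]
  -- sum up
  have hsum : ∑ t ∈ Finset.range T, ‖g (γseq t)‖ ^ 2
      ≤ 2 * C * F (γseq 0) + T * (L ^ 2 * ‖M‖ ^ 2) := by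
    calc ∑ t ∈ Finset.range T, ‖g (γseq t)‖ ^ 2
        ≤ ∑ t ∈ Finset.range T,
          (2 * C * (F (γseq t) - F (γseq (t + 1))) + L ^ 2 * ‖M‖ ^ 2) :=
          Finset.sum_le_sum fun t _ => hstepbound t
      _ = 2 * C * (F (γseq 0) - F (γseq T)) + T * (L ^ 2 * ‖M‖ ^ 2) := by
          rw [Finset.sum_add_distrib, Finset.sum_const, ← Finset.mul_sum,
            Finset.sum_range_sub' (fun t => F (γseq t)), Finset.card_range, nsmul_eq_mul]
      _ ≤ 2 * C * F (γseq 0) + T * (L ^ 2 * ‖M‖ ^ 2) := by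
          have h0 : 0 ≤ F (γseq T) := hf0 _
          nlinarith [mul_nonneg hCpos.le h0]
  have hTpos : (0:ℝ) < T := by exact_mod_cast hT
  have hmul := mul_le_mul_of_nonneg_left hsum (by positivity : (0:ℝ) ≤ 1 / T)
  have heq : (1 / T : ℝ) * (2 * C * F (γseq 0) + T * (L ^ 2 * ‖M‖ ^ 2))
      = (2 * C / T) * F (γseq 0) + L ^ 2 * ‖M‖ ^ 2 := by
    have hTne : (T:ℝ) ≠ 0 := ne_of_gt hTpos
    have h1 : (1 / T : ℝ) * (T * (L ^ 2 * ‖M‖ ^ 2)) = L ^ 2 * ‖M‖ ^ 2 := by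
      rw [one_div, inv_mul_cancel_left₀ hTne]
    have h2 : (1 / T : ℝ) * (2 * C * F (γseq 0)) = 2 * C / T * F (γseq 0) := by ring
    rw [mul_add, h1, h2]
  rw [heq] at hmul
  calc (1 / T : ℝ) * ∑ t ∈ Finset.range T, ‖g (γseq t)‖ ^ 2
      ≤ (2 * C / T) * F (γseq 0) + L ^ 2 * ‖M‖ ^ 2 := hmul
    _ = (2 * β * ‖M‖ ^ 2 / T) * f (M (γseq 0)) + L ^ 2 * ‖M‖ ^ 2 := by
        have hF0 : F (γseq 0) = f (M (γseq 0)) := rfl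
        rw [hF0, hCdef]
        ring
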